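/- ZLPostQAL = NQAL ∪ coNQAL: a language L ⊆ Σ* is recognized with error bound 0 by some Latvian RT-PostQFA if and only if either L is of the form {w : f^a(w) > 0} for some RT-QFA, or the complement of L is of that form. -/

import Mathlib

noncomputable section

/-- The input alphabet extended with the two endmarkers `¢` and `$`. -/
inductive ESym (α : Type) : Type where
  | cent : ESym α
  | dollar : ESym α
  | letter : α → ESym α

/-- The diagonal 0-1 projection matrix supported on a set of states. -/
def projM {m : ℕ} (S : Finset (Fin m)) : Matrix (Fin m) (Fin m) ℂ :=
  Matrix.diagonal (fun i => if i ∈ S then 1 else 0)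

/-- The density matrix obtained by applying, in order, the Kraus families for
`¢`, the letters of `w`, and `$` to the initial density matrix `|q₁⟩⟨q₁|`. -/
def qRun {α : Type} {n : ℕ} {k : ESym α → ℕ}
    (E : ∀ σ : ESym α, Fin (k σ) → Matrix (Fin (n + 1)) (Fin (n + 1)) ℂ)
    (w : List α) : Matrix (Fin (n + 1)) (Fin (n + 1)) ℂ :=
  (ESym.cent :: (w.map ESym.letter ++ [ESym.dollar])).foldl
    (fun ρ σ => ∑ i : Fin (k σ), E σ i * ρ * (E σ i).conjTranspose)
    (Matrix.single 0 0 1)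

/-- A real-time quantum finite automaton with postselection (RT-PostQFA). -/
structure PostQFA (α : Type) where
  n : ℕ
  k : ESym α → ℕ
  E : ∀ σ : ESym α, Fin (k σ) → Matrix (Fin (n + 1)) (Fin (n + 1)) ℂ
  kraus : ∀ σ : ESym α, ∑ i : Fin (k σ), (E σ i).conjTranspose * E σ i = 1
  Qpa : Finset (Fin (n + 1))
  Qpr : Finset (Fin (n + 1))
  disj : Disjoint Qpa Qpr
  postPos : ∀ w : List α,
    0 < ((projM Qpa * qRun E w).trace).re + ((projM Qpr * qRun E w).trace).re

/-- Acceptance probability before postselection. -/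
def PostQFA.pacc {α : Type} (M : PostQFA α) (w : List α) : ℝ :=
  ((projM M.Qpa * qRun M.E w).trace).re

/-- Rejection probability before postselection. -/
def PostQFA.prej {α : Type} (M : PostQFA α) (w : List α) : ℝ :=
  ((projM M.Qpr * qRun M.E w).trace).re

/-- Normalized acceptance probability of an RT-PostQFA. -/
def PostQFA.fa {α : Type} (M : PostQFA α) (w : List α) : ℝ :=
  M.pacc w / (M.pacc w + M.prej w)

/-- Recognition of a language with error bound `ε`. -/
def PostQFA.Recognizes {α : Type} (M : PostQFA α) (L : Set (List α)) (ε : ℝ) : Prop :=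
  ∀ w : List α, (w ∈ L → 1 - ε ≤ M.fa w) ∧ (w ∉ L → M.fa w ≤ ε)

/-- The class of languages recognized by RT-PostQFAs with bounded error. -/
def PostQAL {α : Type} (L : Set (List α)) : Prop :=
  ∃ (M : PostQFA α) (ε : ℝ), 0 ≤ ε ∧ ε < 1 / 2 ∧ M.Recognizes L ε

/-- Recognition with zero error: `fa = 1` on members, `fa = 0` on non-members. -/
def PostQFA.RecognizesZero {α : Type} (M : PostQFA α) (L : Set (List α)) : Prop :=
  ∀ w : List α, (w ∈ L → M.fa w = 1) ∧ (w ∉ L → M.fa w = 0)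

/-- The class of languages recognized by RT-PostQFAs with zero error. -/
def ZPostQAL {α : Type} (L : Set (List α)) : Prop :=
  ∃ M : PostQFA α, M.RecognizesZero L

/-- A standard real-time quantum finite automaton (RT-QFA). -/
structure QFA (α : Type) where
  n : ℕ
  k : ESym α → ℕ
  E : ∀ σ : ESym α, Fin (k σ) → Matrix (Fin (n + 1)) (Fin (n + 1)) ℂ
  kraus : ∀ σ : ESym α, ∑ i : Fin (k σ), (E σ i).conjTranspose * E σ i = 1
  Qa : Finset (Fin (n + 1))

/-- Acceptance probability of an RT-QFA. -/
def QFA.fa {α : Type} (M : QFA α) (w : List α) : ℝ :=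
  ((projM M.Qa * qRun M.E w).trace).re

/-- The flag of a Latvian postselection automaton: accept (`A`) or reject (`R`)
with certainty when the postselection probability is zero. -/
inductive PostFlag : Type where
  | A : PostFlag
  | R : PostFlag
deriving DecidableEq

/-- A Latvian RT-PostQFA: an RT-PostQFA without the positivity requirement,
together with a flag `τ ∈ {A, R}`. -/
structure LPostQFA (α : Type) where
  n : ℕ
  k : ESym α → ℕ
  E : ∀ σ : ESym α, Fin (k σ) → Matrix (Fin (n + 1)) (Fin (n + 1)) ℂ
  kraus : ∀ σ : ESym α, ∑ i : Fin (k σ), (E σ i).conjTranspose * E σ i = 1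
  Qpa : Finset (Fin (n + 1))
  Qpr : Finset (Fin (n + 1))
  disj : Disjoint Qpa Qpr
  tau : PostFlag

/-- Acceptance probability before postselection. -/
def LPostQFA.pacc {α : Type} (M : LPostQFA α) (w : List α) : ℝ :=
  ((projM M.Qpa * qRun M.E w).trace).re

/-- Rejection probability before postselection. -/
def LPostQFA.prej {α : Type} (M : LPostQFA α) (w : List α) : ℝ :=
  ((projM M.Qpr * qRun M.E w).trace).re

/-- Acceptance probability of a Latvian RT-PostQFA. -/
def LPostQFA.fa {α : Type} (M : LPostQFA α) (w : List α) : ℝ :=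
  if 0 < M.pacc w + M.prej w then M.pacc w / (M.pacc w + M.prej w)
  else if M.tau = PostFlag.A then 1 else 0

/-- Recognition of a language with error bound `ε`. -/
def LPostQFA.Recognizes {α : Type} (M : LPostQFA α) (L : Set (List α)) (ε : ℝ) : Prop :=
  ∀ w : List α, (w ∈ L → 1 - ε ≤ M.fa w) ∧ (w ∉ L → M.fa w ≤ ε)

/-- Recognition with zero error: `fa = 1` on members, `fa = 0` on non-members. -/
def LPostQFA.RecognizesZero {α : Type} (M : LPostQFA α) (L : Set (List α)) : Prop :=
  ∀ w : List α, (w ∈ L → M.fa w = 1) ∧ (w ∉ L → M.fa w = 0)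

open ComplexOrder in
lemma qRun_posSemidef {α : Type} {n : ℕ} {k : ESym α → ℕ}
    (E : ∀ σ : ESym α, Fin (k σ) → Matrix (Fin (n + 1)) (Fin (n + 1)) ℂ)
    (w : List α) : (qRun E w).PosSemidef := by
  have hstep : ∀ (l : List (ESym α)) (ρ : Matrix (Fin (n + 1)) (Fin (n + 1)) ℂ),
      ρ.PosSemidef → (l.foldl
        (fun ρ σ => ∑ i : Fin (k σ), E σ i * ρ * (E σ i).conjTranspose) ρ).PosSemidef := by
    intro l
    induction l with
    | nil => intro ρ hρ; exact hρ
    | cons σ t ih =>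
      intro ρ hρ
      apply ih
      apply Finset.sum_induction _ Matrix.PosSemidef
        (fun _ _ => Matrix.PosSemidef.add) Matrix.PosSemidef.zero
      intro i _
      exact hρ.mul_mul_conjTranspose_same (E σ i)
  have hinit : (Matrix.single (0 : Fin (n + 1)) 0 (1 : ℂ)).PosSemidef := by
    have : Matrix.single (0 : Fin (n + 1)) 0 (1 : ℂ) =
        Matrix.diagonal (fun i => if i = 0 then 1 else 0) := by
      ext i j
      simp only [Matrix.single, Matrix.diagonal, Matrix.of_apply]
      by_cases hij : i = j
      · subst hij
        by_cases h0 : i = 0 <;> simp [h0, eq_comm]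
      · simp only [if_neg hij]
        by_cases h1 : (0 : Fin (n+1)) = i
        · by_cases h2 : (0 : Fin (n+1)) = j
          · exact absurd (h1.symm.trans h2) hij
          · simp [h2]
        · simp [h1]
    rw [this]
    refine Matrix.PosSemidef.diagonal fun i => ?_
    by_cases h : i = 0 <;> simp [h]
  exact hstep _ _ hinit

open ComplexOrder in
lemma trace_projM_re_nonneg {m : ℕ} (S : Finset (Fin (m + 1)))
    {ρ : Matrix (Fin (m + 1)) (Fin (m + 1)) ℂ} (hρ : ρ.PosSemidef) :
    0 ≤ ((projM S * ρ).trace).re := by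
  have hdiag : ∀ i : Fin (m + 1), 0 ≤ (ρ i i).re := by
    intro i
    have h := hρ.re_dotProduct_nonneg (Pi.single i 1)
    have heq : dotProduct (star (Pi.single i (1 : ℂ))) (ρ.mulVec (Pi.single i 1)) = ρ i i := by
      simp [dotProduct, Matrix.mulVec, Pi.single_apply, apply_ite (star : ℂ → ℂ),
        ite_mul, Finset.sum_ite_eq']
    rw [heq] at h
    simpa using h
  have : (projM S * ρ).trace = ∑ i : Fin (m + 1), (if i ∈ S then 1 else 0) * ρ i i := by
    rw [Matrix.trace]
    congr 1
    ext i
    simp [projM, Matrix.diag, Matrix.diagonal_mul]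
  rw [this]
  rw [Complex.re_sum]
  refine Finset.sum_nonneg fun i _ => ?_
  by_cases h : i ∈ S <;> simp [h, hdiag i]

lemma projM_empty {m : ℕ} : projM (∅ : Finset (Fin m)) = 0 := by
  simp [projM]

/-- `ZLPostQAL = NQAL ∪ coNQAL`: a language is recognized with zero error by some
Latvian RT-PostQFA iff it, or its complement, is recognized with cutpoint zero by
some RT-QFA. -/
theorem ZLPostQAL_eq_NQAL_union_coNQAL {α : Type} [Fintype α] (L : Set (List α)) :
    (∃ M : LPostQFA α, M.RecognizesZero L) ↔
      ((∃ M : QFA α, L = {w : List α | 0 < M.fa w}) ∨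
        (∃ M : QFA α, Lᶜ = {w : List α | 0 < M.fa w})) := by
  constructor
  · rintro ⟨M, hM⟩
    have hpa : ∀ w, 0 ≤ M.pacc w :=
      fun w => trace_projM_re_nonneg M.Qpa (qRun_posSemidef M.E w)
    have hpr : ∀ w, 0 ≤ M.prej w :=
      fun w => trace_projM_re_nonneg M.Qpr (qRun_posSemidef M.E w)
    cases htau : M.tau with
    | R =>
      left
      refine ⟨⟨M.n, M.k, M.E, M.kraus, M.Qpa⟩, ?_⟩
      ext w
      have hfa : QFA.fa ⟨M.n, M.k, M.E, M.kraus, M.Qpa⟩ w = M.pacc w := rfl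
      simp only [Set.mem_setOf_eq, hfa]
      constructor
      · intro hw
        have h1 := (hM w).1 hw
        rw [LPostQFA.fa] at h1
        by_cases hs : 0 < M.pacc w + M.prej w
        · rw [if_pos hs] at h1
          have := (div_eq_one_iff_eq (ne_of_gt hs)).mp h1
          linarith
        · rw [if_neg hs, htau] at h1; simp at h1
      · intro hw
        by_contra hwL
        have h0 := (hM w).2 hwL
        rw [LPostQFA.fa] at h0
        have hs : 0 < M.pacc w + M.prej w := by linarith [hpr w]
        rw [if_pos hs] at h0
        rcases div_eq_zero_iff.mp h0 with h | h
        · linarith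
        · linarith
    | A =>
      right
      refine ⟨⟨M.n, M.k, M.E, M.kraus, M.Qpr⟩, ?_⟩
      ext w
      have hfa : QFA.fa ⟨M.n, M.k, M.E, M.kraus, M.Qpr⟩ w = M.prej w := rfl
      simp only [Set.mem_setOf_eq, Set.mem_compl_iff, hfa]
      constructor
      · intro hw
        have h0 := (hM w).2 hw
        rw [LPostQFA.fa] at h0
        by_cases hs : 0 < M.pacc w + M.prej w
        · rw [if_pos hs] at h0
          rcases div_eq_zero_iff.mp h0 with h | h
          · linarith
          · linarith
        · rw [if_neg hs, htau] at h0; simp at h0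
      · intro hw hwL
        have h1 := (hM w).1 hwL
        rw [LPostQFA.fa] at h1
        by_cases hs : 0 < M.pacc w + M.prej w
        · rw [if_pos hs] at h1
          have := (div_eq_one_iff_eq (ne_of_gt hs)).mp h1
          linarith
        · exact hs (by linarith [hpa w])
  · rintro (⟨M, hL⟩ | ⟨M, hL⟩)
    · refine ⟨⟨M.n, M.k, M.E, M.kraus, M.Qa, ∅, Finset.disjoint_empty_right _,
        PostFlag.R⟩, ?_⟩
      intro w
      set N : LPostQFA α := ⟨M.n, M.k, M.E, M.kraus, M.Qa, ∅, Finset.disjoint_empty_right _,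
        PostFlag.R⟩ with hN
      have hpacc : N.pacc w = M.fa w := rfl
      have hprej : N.prej w = 0 := by
        show ((projM (∅ : Finset (Fin (M.n + 1))) * qRun M.E w).trace).re = 0
        rw [projM_empty]; simp
      constructor
      · intro hw
        have hpos : 0 < M.fa w := by rw [hL] at hw; exact hw
        rw [LPostQFA.fa, hpacc, hprej, add_zero, if_pos hpos, div_self (ne_of_gt hpos)]
      · intro hw
        have hneg : ¬ 0 < M.fa w := by rw [hL] at hw; exact hw
        rw [LPostQFA.fa, hpacc, hprej, add_zero, if_neg hneg]
        simp [hN]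
    · refine ⟨⟨M.n, M.k, M.E, M.kraus, ∅, M.Qa, Finset.disjoint_empty_left _,
        PostFlag.A⟩, ?_⟩
      intro w
      set N : LPostQFA α := ⟨M.n, M.k, M.E, M.kraus, ∅, M.Qa, Finset.disjoint_empty_left _,
        PostFlag.A⟩ with hN
      have hprej : N.prej w = M.fa w := rfl
      have hpacc : N.pacc w = 0 := by
        show ((projM (∅ : Finset (Fin (M.n + 1))) * qRun M.E w).trace).re = 0
        rw [projM_empty]; simp
      constructor
      · intro hw
        have hneg : ¬ 0 < M.fa w := by
          intro h
          have : w ∈ Lᶜ := by rw [hL]; exact h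
          exact this hw
        rw [LPostQFA.fa, hpacc, hprej, zero_add, if_neg hneg]
        simp [hN]
      · intro hw
        have hpos : 0 < M.fa w := by
          have : w ∈ {w : List α | 0 < M.fa w} := by rw [← hL]; exact hw
          exact this
        rw [LPostQFA.fa, hpacc, hprej, zero_add, if_pos hpos, zero_div]
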